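/- For every state ρ on ℂ^d ⊗ ℂ^d one has D(ρ) ≤ √(2(d−1)/d), and this maximal value is attained: for the state ρ₀ = |1⟩⟨1| ⊗ 𝟙/d (the state representative of the completely positive trace-preserving map ρ ↦ Tr[ρ]·|1⟩⟨1| describing spontaneous decay), D(ρ₀) = √(2(d−1)/d). -/

import Mathlib

open scoped BigOperators Matrix Kronecker ComplexOrder

noncomputable section

/-- Partial trace over the second tensor factor. -/
def ptrace2 (d : ℕ) (ρ : Matrix (Fin d × Fin d) (Fin d × Fin d) ℂ) :
    Matrix (Fin d) (Fin d) ℂ :=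
  Matrix.of fun i k => ∑ j, ρ (i, j) (k, j)

/-- The rank-one projector |ψ⟩⟨ψ|. -/
def outer {n : Type*} [Fintype n] (ψ : n → ℂ) : Matrix n n ℂ :=
  Matrix.of fun p q => ψ p * star (ψ q)

/-- Frobenius (Hilbert-Schmidt) norm of a complex matrix. -/
def frobNorm {m n : Type*} [Fintype m] [Fintype n] (X : Matrix m n ℂ) : ℝ :=
  Real.sqrt (∑ i, ∑ j, Complex.normSq (X i j))

/-- The distance functional D. -/
def DD (d : ℕ) (ρ : Matrix (Fin d × Fin d) (Fin d × Fin d) ℂ) : ℝ :=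
  sInf { x : ℝ | ∃ (n : ℕ) (p : Fin n → ℝ) (ψ : Fin n → (Fin d × Fin d) → ℂ),
    (∀ j, 0 ≤ p j) ∧ (∑ j, p j = 1) ∧
    (∀ j, ∑ q, Complex.normSq (ψ j q) = 1) ∧
    ρ = ∑ j, (p j : ℂ) • outer (ψ j) ∧
    x = ∑ j, p j * (Real.sqrt 2 * frobNorm (ptrace2 d (outer (ψ j)) - (d : ℂ)⁻¹ • 1)) }

lemma frobNorm_nonneg {m n : Type*} [Fintype m] [Fintype n] (X : Matrix m n ℂ) :
    0 ≤ frobNorm X := Real.sqrt_nonneg _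

lemma ptrace2_outer_apply (d : ℕ) (ψ : (Fin d × Fin d) → ℂ) (i k : Fin d) :
    ptrace2 d (outer ψ) i k = ∑ a, ψ (i, a) * star (ψ (k, a)) := rfl

/-- Cost bound for a pure state. -/
lemma pure_cost_le (d : ℕ) (hd : 0 < d) (ψ : (Fin d × Fin d) → ℂ)
    (hψ : ∑ q, Complex.normSq (ψ q) = 1) :
    frobNorm (ptrace2 d (outer ψ) - (d : ℂ)⁻¹ • 1) ≤ Real.sqrt ((d - 1) / d) := by
  have hd' : (0:ℝ) < d := Nat.cast_pos.mpr hd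
  set σ : Matrix (Fin d) (Fin d) ℂ := ptrace2 d (outer ψ) with hσ
  set r : Fin d → ℝ := fun i => ∑ a, Complex.normSq (ψ (i, a)) with hr
  have hrsum : ∑ i, r i = 1 := by
    rw [← hψ]; exact (Fintype.sum_prod_type (fun q : Fin d × Fin d => Complex.normSq (ψ q))).symm
  have hrnn : ∀ i, 0 ≤ r i := fun i => Finset.sum_nonneg fun a _ => Complex.normSq_nonneg _
  have hdiag : ∀ i, σ i i = (r i : ℂ) := by
    intro i
    rw [hσ, ptrace2_outer_apply]
    simp [hr, Complex.mul_conj]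
  have hCS : ∀ i k, Complex.normSq (σ i k) ≤ r i * r k := by
    intro i k
    rw [hσ, ptrace2_outer_apply]
    have h1 : ‖∑ a, ψ (i, a) * star (ψ (k, a))‖ ≤
        ∑ a, ‖ψ (i, a)‖ * ‖ψ (k, a)‖ := by
      refine (norm_sum_le _ _).trans_eq ?_
      exact Finset.sum_congr rfl fun a _ => by simp [map_mul]
    have h2 : (∑ a, ‖ψ (i, a)‖ * ‖ψ (k, a)‖)^2 ≤
        (∑ a, ‖ψ (i, a)‖^2) * (∑ a, ‖ψ (k, a)‖^2) :=
      Finset.sum_mul_sq_le_sq_mul_sq _ _ _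
    have h3 : Complex.normSq (∑ a, ψ (i, a) * star (ψ (k, a))) ≤
        (∑ a, ‖ψ (i, a)‖ * ‖ψ (k, a)‖)^2 := by
      rw [Complex.normSq_eq_norm_sq]
      exact pow_le_pow_left₀ (norm_nonneg _) h1 2
    refine h3.trans (h2.trans_eq ?_)
    simp [hr, Complex.sq_norm]
  have key : ∑ i, ∑ k, Complex.normSq ((σ - (d : ℂ)⁻¹ • 1) i k) ≤ (d - 1) / d := by
    have expand : ∀ i k, Complex.normSq ((σ - (d : ℂ)⁻¹ • 1) i k) =
        Complex.normSq (σ i k) + (if i = k then (d:ℝ)⁻¹^2 - 2 * (d:ℝ)⁻¹ * r i else 0) := by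
      intro i k
      have h1 : (σ - (d : ℂ)⁻¹ • 1) i k = σ i k - (if i = k then ((d:ℝ)⁻¹:ℂ) else 0) := by
        by_cases h : i = k <;>
          simp [Matrix.sub_apply, Matrix.smul_apply, Matrix.one_apply, h]
      rw [h1]
      by_cases h : i = k
      · subst h
        rw [Complex.normSq_sub]
        simp [hdiag, Complex.normSq_ofReal, ← Complex.ofReal_mul]
        ring
      · simp [h]
    rw [Finset.sum_congr rfl fun i _ => Finset.sum_congr rfl fun k _ => expand i k]
    have step : ∑ i, ∑ k, (Complex.normSq (σ i k) +
        (if i = k then (d:ℝ)⁻¹^2 - 2 * (d:ℝ)⁻¹ * r i else 0)) =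
        (∑ i, ∑ k, Complex.normSq (σ i k)) + (d * (d:ℝ)⁻¹^2 - 2 * (d:ℝ)⁻¹) := by
      rw [Finset.sum_congr rfl fun i _ => Finset.sum_add_distrib, Finset.sum_add_distrib]
      congr 1
      have : ∀ i : Fin d, ∑ k, (if i = k then (d:ℝ)⁻¹^2 - 2 * (d:ℝ)⁻¹ * r i else 0) =
          (d:ℝ)⁻¹^2 - 2 * (d:ℝ)⁻¹ * r i := fun i => by simp
      rw [Finset.sum_congr rfl fun i _ => this i, Finset.sum_sub_distrib,
        Finset.sum_const, Finset.card_univ, Fintype.card_fin, nsmul_eq_mul]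
      have h4 : ∑ i, 2 * (d:ℝ)⁻¹ * r i = 2 * (d:ℝ)⁻¹ * ∑ i, r i := by
        rw [Finset.mul_sum]
      rw [h4, hrsum, mul_one]
    rw [step]
    have hT : ∑ i, ∑ k, Complex.normSq (σ i k) ≤ 1 := by
      calc ∑ i, ∑ k, Complex.normSq (σ i k) ≤ ∑ i, ∑ k, r i * r k :=
            Finset.sum_le_sum fun i _ => Finset.sum_le_sum fun k _ => hCS i k
        _ = (∑ i, r i) * (∑ k, r k) := by rw [Finset.sum_mul_sum]
        _ = 1 := by rw [hrsum]; ring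
    have hdd : (d:ℝ) * (d:ℝ)⁻¹^2 - 2 * (d:ℝ)⁻¹ = -(d:ℝ)⁻¹ := by
      field_simp; ring
    rw [hdd]
    have hne : (d:ℝ) ≠ 0 := hd'.ne'
    calc ∑ i, ∑ k, Complex.normSq (σ i k) + -(d:ℝ)⁻¹ ≤ 1 + -(d:ℝ)⁻¹ := by linarith
      _ = (d - 1) / d := by field_simp; ring
  exact Real.sqrt_le_sqrt key

lemma frob_E (d : ℕ) (hd : 0 < d) :
    frobNorm ((Matrix.single (⟨0, hd⟩ : Fin d) (⟨0, hd⟩ : Fin d) (1 : ℂ)) -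
      (d : ℂ)⁻¹ • 1) = Real.sqrt ((d - 1) / d) := by
  have hd' : (0:ℝ) < d := Nat.cast_pos.mpr hd
  set z : Fin d := ⟨0, hd⟩ with hz
  have h1 : ∀ i k : Fin d,
      Complex.normSq ((Matrix.single z z (1:ℂ) - (d : ℂ)⁻¹ • 1) i k) =
      if i = k then (if z = i then (1 - (d:ℝ)⁻¹)^2 else ((d:ℝ)⁻¹)^2) else 0 := by
    intro i k
    by_cases h : i = k
    · subst h
      by_cases hzi : z = i
      · subst hzi
        have : (Matrix.single z z (1:ℂ) - (d : ℂ)⁻¹ • 1) z z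
            = ((1 - (d:ℝ)⁻¹ : ℝ) : ℂ) := by
          simp [Matrix.single, Matrix.sub_apply, Matrix.smul_apply, Matrix.one_apply]
        rw [this, Complex.normSq_ofReal]
        simp [sq]
      · have : (Matrix.single z z (1:ℂ) - (d : ℂ)⁻¹ • 1) i i
            = ((-(d:ℝ)⁻¹ : ℝ) : ℂ) := by
          simp [Matrix.single, Matrix.sub_apply, Matrix.smul_apply, Matrix.one_apply, hzi]
        rw [this, Complex.normSq_ofReal]
        simp [sq, hzi]
    · have hne : (Matrix.single z z (1:ℂ) - (d : ℂ)⁻¹ • 1) i k = 0 := by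
        have : ¬ (z = i ∧ z = k) := by
          rintro ⟨rfl, rfl⟩; exact h rfl
        simp [Matrix.single, Matrix.sub_apply, Matrix.smul_apply, Matrix.one_apply, h, this]
      rw [hne]
      simp [h]
  have h2 : ∑ i : Fin d, ∑ k : Fin d,
      Complex.normSq ((Matrix.single z z (1:ℂ) - (d : ℂ)⁻¹ • 1) i k)
      = (d - 1) / d := by
    rw [Finset.sum_congr rfl fun i _ => Finset.sum_congr rfl fun k _ => h1 i k]
    have h3 : ∀ i : Fin d, (∑ k, if i = k then
        (if z = i then (1 - (d:ℝ)⁻¹)^2 else ((d:ℝ)⁻¹)^2) else 0)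
        = (if z = i then (1 - (d:ℝ)⁻¹)^2 else ((d:ℝ)⁻¹)^2) := fun i => by simp
    rw [Finset.sum_congr rfl fun i _ => h3 i]
    have h4 : ∀ i : Fin d, (if z = i then (1 - (d:ℝ)⁻¹)^2 else ((d:ℝ)⁻¹)^2)
        = ((d:ℝ)⁻¹)^2 + (if z = i then (1 - (d:ℝ)⁻¹)^2 - ((d:ℝ)⁻¹)^2 else 0) := by
      intro i; by_cases h : z = i <;> simp [h]
    rw [Finset.sum_congr rfl fun i _ => h4 i, Finset.sum_add_distrib, Finset.sum_const,
      Finset.card_univ, Fintype.card_fin, Finset.sum_ite_eq, if_pos (Finset.mem_univ z),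
      nsmul_eq_mul]
    have : (d:ℝ) ≠ 0 := hd'.ne'
    field_simp
    ring
  rw [frobNorm, h2]

lemma ptrace2_supported (d : ℕ) (hd : 0 < d) (ψ : (Fin d × Fin d) → ℂ)
    (hψ : ∑ q, Complex.normSq (ψ q) = 1)
    (hsupp : ∀ i a, i ≠ (⟨0, hd⟩ : Fin d) → ψ (i, a) = 0) :
    ptrace2 d (outer ψ) = Matrix.single (⟨0, hd⟩ : Fin d) (⟨0, hd⟩ : Fin d) (1 : ℂ) := by
  set z : Fin d := ⟨0, hd⟩ with hz
  have hnorm0 : ∑ a, Complex.normSq (ψ (z, a)) = 1 := by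
    have := hψ
    rw [Fintype.sum_prod_type (fun q : Fin d × Fin d => Complex.normSq (ψ q))] at this
    rw [← this]
    symm
    refine Finset.sum_eq_single z (fun i _ hi => ?_) (fun h => absurd (Finset.mem_univ z) h)
    refine Finset.sum_eq_zero fun a _ => by rw [hsupp i a hi]; simp
  ext i k
  rw [ptrace2_outer_apply]
  by_cases hi : i = z
  · by_cases hk : k = z
    · subst hi; subst hk
      have : ∀ a : Fin d, ψ (z, a) * star (ψ (z, a)) = ((Complex.normSq (ψ (z, a)) : ℝ) : ℂ) :=
        fun a => Complex.mul_conj _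
      rw [Finset.sum_congr rfl fun a _ => this a, ← Complex.ofReal_sum, hnorm0]
      simp [Matrix.single]
    · have : ∀ a : Fin d, ψ (i, a) * star (ψ (k, a)) = 0 := fun a => by
        rw [hsupp k a hk]; simp
      rw [Finset.sum_congr rfl fun a _ => this a, Finset.sum_const_zero]
      simp [Matrix.single, show z ≠ k from fun h => hk h.symm]
  · have : ∀ a : Fin d, ψ (i, a) * star (ψ (k, a)) = 0 := fun a => by
      rw [hsupp i a hi]; simp
    rw [Finset.sum_congr rfl fun a _ => this a, Finset.sum_const_zero]
    simp [Matrix.single, show z ≠ i from fun h => hi h.symm]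

lemma sqrt_two_mul (d : ℕ) :
    Real.sqrt 2 * Real.sqrt ((d - 1) / d) = Real.sqrt (2 * (d - 1) / d) := by
  rw [← Real.sqrt_mul (by norm_num : (0:ℝ) ≤ 2), mul_div_assoc]

def DSet (d : ℕ) (ρ : Matrix (Fin d × Fin d) (Fin d × Fin d) ℂ) : Set ℝ :=
  { x : ℝ | ∃ (n : ℕ) (p : Fin n → ℝ) (ψ : Fin n → (Fin d × Fin d) → ℂ),
    (∀ j, 0 ≤ p j) ∧ (∑ j, p j = 1) ∧
    (∀ j, ∑ q, Complex.normSq (ψ j q) = 1) ∧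
    ρ = ∑ j, (p j : ℂ) • outer (ψ j) ∧
    x = ∑ j, p j * (Real.sqrt 2 * frobNorm (ptrace2 d (outer (ψ j)) - (d : ℂ)⁻¹ • 1)) }

lemma DD_eq_sInf (d : ℕ) (ρ : Matrix (Fin d × Fin d) (Fin d × Fin d) ℂ) :
    DD d ρ = sInf (DSet d ρ) := rfl

lemma DSet_bddBelow (d : ℕ) (ρ : Matrix (Fin d × Fin d) (Fin d × Fin d) ℂ) :
    BddBelow (DSet d ρ) := by
  refine ⟨0, fun x hx => ?_⟩
  obtain ⟨n, p, ψ, h0, -, -, -, hx⟩ := hx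
  rw [hx]
  exact Finset.sum_nonneg fun j _ => mul_nonneg (h0 j)
    (mul_nonneg (Real.sqrt_nonneg _) (frobNorm_nonneg _))

/-- Every element of `DSet` built from a decomposition has cost `≤ √(2(d-1)/d)`;
conversely every state admits a decomposition. -/
lemma exists_mem_DSet_le (d : ℕ) (hd : 0 < d)
    (ρ : Matrix (Fin d × Fin d) (Fin d × Fin d) ℂ)
    (hρ : ρ.PosSemidef) (hρtr : ρ.trace = 1) :
    ∃ x ∈ DSet d ρ, x ≤ Real.sqrt (2 * (d - 1) / d) := by
  obtain ⟨B, hB⟩ : ∃ B : Matrix (Fin d × Fin d) (Fin d × Fin d) ℂ, ρ = Bᴴ * B := by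
    open scoped MatrixOrder in
    obtain ⟨B, hB⟩ := CStarAlgebra.nonneg_iff_eq_star_mul_self.mp hρ.nonneg
    exact ⟨B, hB⟩
  set e : Fin (d * d) ≃ Fin d × Fin d := finProdFinEquiv.symm with he
  set p : Fin (d * d) → ℝ := fun j => ∑ q, Complex.normSq (B (e j) q) with hp
  have hp0 : ∀ j, 0 ≤ p j := fun j => Finset.sum_nonneg fun q _ => Complex.normSq_nonneg _
  -- trace computation
  have htrace : (((∑ i : Fin d × Fin d, ∑ q, Complex.normSq (B i q)) : ℝ) : ℂ) = 1 := by
    rw [← hρtr, hB, Matrix.trace]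
    push_cast
    rw [Finset.sum_comm]
    refine Finset.sum_congr rfl fun q _ => ?_
    rw [Matrix.diag_apply, Matrix.mul_apply]
    refine Finset.sum_congr rfl fun i _ => ?_
    rw [Matrix.conjTranspose_apply]
    rw [mul_comm, Complex.star_def, Complex.mul_conj]
  have htr' : ∑ i : Fin d × Fin d, ∑ q, Complex.normSq (B i q) = 1 := by
    exact_mod_cast htrace
  have hpsum : ∑ j, p j = 1 := by
    rw [hp]
    rw [Equiv.sum_comp e (fun i => ∑ q, Complex.normSq (B i q))]
    exact htr'
  set ψ : Fin (d * d) → (Fin d × Fin d) → ℂ := fun j q =>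
    if p j = 0 then (if q = e j then 1 else 0)
    else ((Real.sqrt (p j) : ℝ) : ℂ)⁻¹ * star (B (e j) q) with hψdef
  have hzero : ∀ j, p j = 0 → ∀ q, B (e j) q = 0 := by
    intro j hj q
    have := (Finset.sum_eq_zero_iff_of_nonneg
      (fun q _ => Complex.normSq_nonneg (B (e j) q))).mp hj q (Finset.mem_univ q)
    exact Complex.normSq_eq_zero.mp this
  have hsq : ∀ j, p j ≠ 0 → (Real.sqrt (p j))⁻¹ * (Real.sqrt (p j))⁻¹ = (p j)⁻¹ := by
    intro j hj
    rw [← mul_inv, Real.mul_self_sqrt (hp0 j)]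
  have hunit : ∀ j, ∑ q, Complex.normSq (ψ j q) = 1 := by
    intro j
    by_cases hj : p j = 0
    · have : ∀ q, Complex.normSq (ψ j q) = if q = e j then 1 else 0 := by
        intro q
        rw [hψdef]
        simp only [hj, if_true]
        split <;> simp
      rw [Finset.sum_congr rfl fun q _ => this q]
      simp
    · have : ∀ q, Complex.normSq (ψ j q) = (p j)⁻¹ * Complex.normSq (B (e j) q) := by
        intro q
        rw [hψdef]
        simp only [hj, if_false]
        rw [Complex.normSq_mul, Complex.star_def, Complex.normSq_conj, ← Complex.ofReal_inv,
          Complex.normSq_ofReal, ← hsq j hj]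
      rw [Finset.sum_congr rfl fun q _ => this q, ← Finset.mul_sum]
      exact inv_mul_cancel₀ hj
  have hdecomp : ρ = ∑ j, (p j : ℂ) • outer (ψ j) := by
    ext q1 q2
    rw [hB]
    have lhs : (Bᴴ * B) q1 q2 = ∑ j, star (B (e j) q1) * B (e j) q2 := by
      have hce : ∀ i, Bᴴ q1 i * B i q2 = star (B i q1) * B i q2 := fun i => by
        rw [Matrix.conjTranspose_apply]
      rw [Matrix.mul_apply, Finset.sum_congr rfl fun i _ => hce i,
        ← Equiv.sum_comp e (fun i => star (B i q1) * B i q2)]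
    rw [lhs, Matrix.sum_apply]
    refine Finset.sum_congr rfl fun j _ => ?_
    rw [Matrix.smul_apply]
    by_cases hj : p j = 0
    · rw [hzero j hj q1, hzero j hj q2, hj]
      simp
    · have hψ1 : ψ j q1 = ((Real.sqrt (p j) : ℝ) : ℂ)⁻¹ * star (B (e j) q1) := by
        rw [hψdef]; simp [hj]
      have hψ2 : ψ j q2 = ((Real.sqrt (p j) : ℝ) : ℂ)⁻¹ * star (B (e j) q2) := by
        rw [hψdef]; simp [hj]
      show star (B (e j) q1) * B (e j) q2 = (p j : ℂ) * (outer (ψ j) q1 q2)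
      rw [show outer (ψ j) q1 q2 = ψ j q1 * star (ψ j q2) from rfl, hψ1, hψ2]
      rw [star_mul', star_star, star_inv₀, Complex.star_def, Complex.conj_ofReal]
      have hc : (p j : ℂ) * (((Real.sqrt (p j) : ℝ) : ℂ)⁻¹ * ((Real.sqrt (p j) : ℝ) : ℂ)⁻¹)
          = 1 := by
        have hreal : p j * ((Real.sqrt (p j))⁻¹ * (Real.sqrt (p j))⁻¹) = 1 := by
          rw [hsq j hj, mul_inv_cancel₀ hj]
        exact_mod_cast hreal
      calc star (B (e j) q1) * B (e j) q2
          = ((p j : ℂ) * (((Real.sqrt (p j) : ℝ) : ℂ)⁻¹ * ((Real.sqrt (p j) : ℝ) : ℂ)⁻¹)) *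
            (star (B (e j) q1) * B (e j) q2) := by rw [hc, one_mul]
        _ = (p j : ℂ) * (((Real.sqrt (p j) : ℝ) : ℂ)⁻¹ * star (B (e j) q1) *
            (((Real.sqrt (p j) : ℝ) : ℂ)⁻¹ * B (e j) q2)) := by ring
  refine ⟨∑ j, p j * (Real.sqrt 2 * frobNorm (ptrace2 d (outer (ψ j)) - (d : ℂ)⁻¹ • 1)),
    ⟨d * d, p, ψ, hp0, hpsum, hunit, hdecomp, rfl⟩, ?_⟩
  calc ∑ j, p j * (Real.sqrt 2 * frobNorm (ptrace2 d (outer (ψ j)) - (d : ℂ)⁻¹ • 1))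
      ≤ ∑ j, p j * (Real.sqrt 2 * Real.sqrt ((d - 1) / d)) := by
        refine Finset.sum_le_sum fun j _ => ?_
        refine mul_le_mul_of_nonneg_left ?_ (hp0 j)
        exact mul_le_mul_of_nonneg_left (pure_cost_le d hd (ψ j) (hunit j)) (Real.sqrt_nonneg 2)
    _ = Real.sqrt 2 * Real.sqrt ((d - 1) / d) := by
        rw [← Finset.sum_mul, hpsum, one_mul]
    _ = Real.sqrt (2 * (d - 1) / d) := sqrt_two_mul d

/-- D is bounded by √(2(d−1)/d), and the bound is attained by the state
|1⟩⟨1| ⊗ 𝟙/d, the state representative of the spontaneous-decay channel. -/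
theorem DD_le_max_value_and_attained
    (d : ℕ) (hd : 0 < d)
    (ρ : Matrix (Fin d × Fin d) (Fin d × Fin d) ℂ)
    (hρ : ρ.PosSemidef) (hρtr : ρ.trace = 1) :
    DD d ρ ≤ Real.sqrt (2 * (d - 1) / d) ∧
    DD d ((Matrix.single (⟨0, hd⟩ : Fin d) (⟨0, hd⟩ : Fin d) (1 : ℂ)) ⊗ₖ
        ((d : ℂ)⁻¹ • (1 : Matrix (Fin d) (Fin d) ℂ)))
      = Real.sqrt (2 * (d - 1) / d) := by
  have hd' : (0:ℝ) < d := Nat.cast_pos.mpr hd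
  set z : Fin d := ⟨0, hd⟩ with hz
  set V : ℝ := Real.sqrt (2 * (d - 1) / d) with hV
  constructor
  · obtain ⟨x, hxmem, hxle⟩ := exists_mem_DSet_le d hd ρ hρ hρtr
    exact (csInf_le (DSet_bddBelow d ρ) hxmem).trans hxle
  -- Part 2
  set ρ₀ : Matrix (Fin d × Fin d) (Fin d × Fin d) ℂ :=
    (Matrix.single z z (1 : ℂ)) ⊗ₖ ((d : ℂ)⁻¹ • (1 : Matrix (Fin d) (Fin d) ℂ)) with hρ₀
  -- the explicit decomposition showing V ∈ DSet d ρ₀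
  set ψ : Fin d → (Fin d × Fin d) → ℂ := fun j q => if q = (z, j) then 1 else 0 with hψdef
  have hsupp : ∀ j i a, i ≠ z → ψ j (i, a) = 0 := by
    intro j i a hi
    rw [hψdef]
    simp only
    rw [if_neg]
    intro h
    exact hi (congrArg Prod.fst h)
  have hunit : ∀ j, ∑ q, Complex.normSq (ψ j q) = 1 := by
    intro j
    have : ∀ q, Complex.normSq (ψ j q) = if q = (z, j) then 1 else 0 := by
      intro q; rw [hψdef]; simp only; split <;> simp
    rw [Finset.sum_congr rfl fun q _ => this q]
    simp
  have hptr : ∀ j, ptrace2 d (outer (ψ j)) = Matrix.single z z (1 : ℂ) :=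
    fun j => ptrace2_supported d hd (ψ j) (hunit j) (hsupp j)
  have hdecomp : ρ₀ = ∑ j, (((d:ℝ)⁻¹ : ℝ) : ℂ) • outer (ψ j) := by
    ext ia kb
    obtain ⟨i, a⟩ := ia
    obtain ⟨k, b⟩ := kb
    rw [hρ₀, Matrix.kroneckerMap_apply, Matrix.sum_apply]
    have hterm : ∀ j, ((((d:ℝ)⁻¹ : ℝ) : ℂ) • outer (ψ j)) (i, a) (k, b)
        = (((d:ℝ)⁻¹ : ℝ) : ℂ) * ((if (i, a) = (z, j) then (1:ℂ) else 0) *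
          (if (k, b) = (z, j) then (1:ℂ) else 0)) := by
      intro j
      rw [Matrix.smul_apply]
      congr 1
      rw [show outer (ψ j) (i,a) (k,b) = ψ j (i,a) * star (ψ j (k,b)) from rfl, hψdef]
      simp only
      congr 1
      split <;> simp
    rw [Finset.sum_congr rfl fun j _ => hterm j]
    by_cases hik : i = z ∧ k = z
    · obtain ⟨rfl, rfl⟩ := hik
      by_cases hab : a = b
      · subst hab
        have : ∀ j : Fin d, (((d:ℝ)⁻¹ : ℝ) : ℂ) * ((if (z, a) = (z, j) then (1:ℂ) else 0) *
            (if (z, a) = (z, j) then (1:ℂ) else 0)) = if a = j then (((d:ℝ)⁻¹ : ℝ) : ℂ) else 0 := by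
          intro j
          by_cases h : a = j <;> simp [h, Prod.ext_iff]
        rw [Finset.sum_congr rfl fun j _ => this j, Finset.sum_ite_eq]
        simp [Matrix.single, Matrix.smul_apply, Matrix.one_apply]
      · have : ∀ j : Fin d, (((d:ℝ)⁻¹ : ℝ) : ℂ) * ((if (z, a) = (z, j) then (1:ℂ) else 0) *
            (if (z, b) = (z, j) then (1:ℂ) else 0)) = 0 := by
          intro j
          by_cases h : a = j
          · subst h
            simp [Prod.ext_iff, hab, show ¬ b = a from fun hh => hab hh.symm]
          · simp [Prod.ext_iff, h]
        rw [Finset.sum_congr rfl fun j _ => this j, Finset.sum_const_zero]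
        simp [Matrix.single, Matrix.smul_apply, Matrix.one_apply, hab,
          show ¬ b = a from fun h => hab h.symm]
    · have hterm0 : ∀ j : Fin d, (((d:ℝ)⁻¹ : ℝ) : ℂ) * ((if (i, a) = (z, j) then (1:ℂ) else 0) *
          (if (k, b) = (z, j) then (1:ℂ) else 0)) = 0 := by
        intro j
        rcases not_and_or.mp hik with h | h
        · rw [if_neg (show ¬ (i, a) = (z, j) from fun hh => h (congrArg Prod.fst hh))]; ring
        · rw [if_neg (show ¬ (k, b) = (z, j) from fun hh => h (congrArg Prod.fst hh))]; ring
      rw [Finset.sum_congr rfl fun j _ => hterm0 j, Finset.sum_const_zero]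
      have : ¬ (z = i ∧ z = k) := fun ⟨h1, h2⟩ => hik ⟨h1.symm, h2.symm⟩
      simp [Matrix.single, this]
  have hVmem : V ∈ DSet d ρ₀ := by
    refine ⟨d, fun _ => (d:ℝ)⁻¹, ψ, fun j => by positivity, ?_, hunit, hdecomp, ?_⟩
    · rw [Finset.sum_const, Finset.card_univ, Fintype.card_fin, nsmul_eq_mul,
        mul_inv_cancel₀ hd'.ne']
    · have : ∀ j : Fin d, (d:ℝ)⁻¹ * (Real.sqrt 2 *
          frobNorm (ptrace2 d (outer (ψ j)) - (d : ℂ)⁻¹ • 1))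
          = (d:ℝ)⁻¹ * (Real.sqrt 2 * Real.sqrt ((d - 1) / d)) := by
        intro j
        rw [hptr j, frob_E d hd]
      rw [Finset.sum_congr rfl fun j _ => this j, Finset.sum_const, Finset.card_univ,
        Fintype.card_fin, nsmul_eq_mul, ← mul_assoc, mul_inv_cancel₀ hd'.ne', one_mul,
        sqrt_two_mul]
  have hlower : ∀ x ∈ DSet d ρ₀, V ≤ x := by
    rintro x ⟨n, p, φ, h0, h1, hun, hdec, hx⟩
    -- support of each φ j with p j ≠ 0
    have hφsupp : ∀ j, p j ≠ 0 → ∀ i a, i ≠ z → φ j (i, a) = 0 := by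
      intro j hj i a hi
      have hentry : ρ₀ (i, a) (i, a) = 0 := by
        rw [hρ₀, Matrix.kroneckerMap_apply]
        have : Matrix.single z z (1:ℂ) i i = 0 := by
          simp [Matrix.single, show z ≠ i from fun h => hi h.symm]
        rw [this, zero_mul]
      have hsum : (((∑ j', p j' * Complex.normSq (φ j' (i, a))) : ℝ) : ℂ) = 0 := by
        rw [← hentry, hdec, Matrix.sum_apply]
        push_cast
        refine (Finset.sum_congr rfl fun j' _ => ?_).symm
        rw [Matrix.smul_apply, show outer (φ j') (i,a) (i,a) = φ j' (i,a) * star (φ j' (i,a))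
          from rfl, Complex.star_def, Complex.mul_conj]
        rw [smul_eq_mul]
      have hreal : ∑ j', p j' * Complex.normSq (φ j' (i, a)) = 0 := by
        exact_mod_cast hsum
      have := (Finset.sum_eq_zero_iff_of_nonneg (fun j' _ =>
        mul_nonneg (h0 j') (Complex.normSq_nonneg _))).mp hreal j (Finset.mem_univ j)
      have hns : Complex.normSq (φ j (i, a)) = 0 := by
        rcases mul_eq_zero.mp this with h | h
        · exact absurd h hj
        · exact h
      exact Complex.normSq_eq_zero.mp hns
    have hcost : ∀ j, p j ≠ 0 →
        frobNorm (ptrace2 d (outer (φ j)) - (d : ℂ)⁻¹ • 1) = Real.sqrt ((d - 1) / d) := by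
      intro j hj
      rw [ptrace2_supported d hd (φ j) (hun j) (hφsupp j hj), frob_E d hd]
    have hxeq : x = V := by
      rw [hx]
      have : ∀ j, p j * (Real.sqrt 2 * frobNorm (ptrace2 d (outer (φ j)) - (d : ℂ)⁻¹ • 1))
          = p j * (Real.sqrt 2 * Real.sqrt ((d - 1) / d)) := by
        intro j
        by_cases hj : p j = 0
        · rw [hj, zero_mul, zero_mul]
        · rw [hcost j hj]
      rw [Finset.sum_congr rfl fun j _ => this j, ← Finset.sum_mul, h1, one_mul,
        sqrt_two_mul]
    exact hxeq.ge
  exact le_antisymm (csInf_le (DSet_bddBelow d ρ₀) hVmem)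
    (le_csInf ⟨V, hVmem⟩ hlower)
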